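/- arXiv:2302.09680 — 3 statements merged into one kernel-verified Lean document; each statement's English description precedes it below -/
import Mathlib

section
/- For the k-th Haar matrix M_k and Φ = (k+1)·M_k, the maximum over i ∈ {1,…,2^k} of the ℓ2-norm of the sum of the first i rows of Φ is at most (k+1)^{3/2}, and the corresponding maximum ℓ1-norm is at most (k+1)^2. -/
open Matrix Finset

/-- The `k`-th Haar matrix `M_k` of size `2^k × 2^k`. -/
noncomputable def haarMatrix (k : ℕ) : Matrix (Fin (2 ^ k)) (Fin (2 ^ k)) ℝ :=
  fun i j =>
    if j.val = 0 then 1 / (2 : ℝ) ^ k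
    else
      let p := Nat.log2 j.val
      let q := j.val - 2 ^ p
      let w := 2 ^ (k - p)
      if q * w ≤ i.val ∧ i.val < q * w + w / 2 then (2 : ℝ) ^ p / (2 : ℝ) ^ k
      else if q * w + w / 2 ≤ i.val ∧ i.val < (q + 1) * w then -((2 : ℝ) ^ p / (2 : ℝ) ^ k)
      else 0

/-- Nat-indexed version of a column of the Haar matrix. -/
noncomputable def colFun (k c n : ℕ) : ℝ :=
  if c = 0 then 1 / (2 : ℝ) ^ k
  else
    let p := Nat.log2 c
    let q := c - 2 ^ p
    let w := 2 ^ (k - p)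
    if q * w ≤ n ∧ n < q * w + w / 2 then (2 : ℝ) ^ p / (2 : ℝ) ^ k
    else if q * w + w / 2 ≤ n ∧ n < (q + 1) * w then -((2 : ℝ) ^ p / (2 : ℝ) ^ k)
    else 0

lemma haar_eq_colFun (k : ℕ) (i j : Fin (2 ^ k)) :
    haarMatrix k i j = colFun k j.val i.val := rfl

lemma sum_ind (m l r : ℕ) :
    ∑ n ∈ Finset.range m, (if l ≤ n ∧ n < r then (1 : ℝ) else 0)
      = ((min r m - l : ℕ) : ℝ) := by
  rw [Finset.sum_boole]
  have h : (Finset.range m).filter (fun n => l ≤ n ∧ n < r) = Finset.Ico l (min r m) := by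
    ext n
    simp only [Finset.mem_filter, Finset.mem_range, Finset.mem_Ico]
    omega
  rw [h, Nat.card_Ico]

lemma sum_pm (m l w : ℕ) (a : ℝ) :
    ∑ n ∈ Finset.range m,
        (if l ≤ n ∧ n < l + w / 2 then a else if l + w / 2 ≤ n ∧ n < l + w then -a else 0)
      = a * (((min (l + w / 2) m - l : ℕ) : ℝ) - ((min (l + w) m - (l + w / 2) : ℕ) : ℝ)) := by
  have point : ∀ n ∈ Finset.range m,
      (if l ≤ n ∧ n < l + w / 2 then a else if l + w / 2 ≤ n ∧ n < l + w then -a else 0)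
        = a * ((if l ≤ n ∧ n < l + w / 2 then (1 : ℝ) else 0)
            - (if l + w / 2 ≤ n ∧ n < l + w then (1 : ℝ) else 0)) := by
    intro n _
    split_ifs <;> first | (exfalso; omega) | ring
  rw [Finset.sum_congr rfl point, ← Finset.mul_sum, Finset.sum_sub_distrib, sum_ind, sum_ind]

lemma colSum (k c : ℕ) (hc : c ≠ 0) (m : ℕ) :
    ∑ n ∈ Finset.range m, colFun k c n
      = ((2 : ℝ) ^ Nat.log2 c / (2 : ℝ) ^ k) *
          (((min ((c - 2 ^ Nat.log2 c) * 2 ^ (k - Nat.log2 c) + 2 ^ (k - Nat.log2 c) / 2) m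
              - (c - 2 ^ Nat.log2 c) * 2 ^ (k - Nat.log2 c) : ℕ) : ℝ)
           - ((min ((c - 2 ^ Nat.log2 c) * 2 ^ (k - Nat.log2 c) + 2 ^ (k - Nat.log2 c)) m
              - ((c - 2 ^ Nat.log2 c) * 2 ^ (k - Nat.log2 c) + 2 ^ (k - Nat.log2 c) / 2) : ℕ) : ℝ)) := by
  have point : ∀ n ∈ Finset.range m, colFun k c n
      = (if (c - 2 ^ Nat.log2 c) * 2 ^ (k - Nat.log2 c) ≤ n ∧
            n < (c - 2 ^ Nat.log2 c) * 2 ^ (k - Nat.log2 c) + 2 ^ (k - Nat.log2 c) / 2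
          then ((2 : ℝ) ^ Nat.log2 c / (2 : ℝ) ^ k)
          else if (c - 2 ^ Nat.log2 c) * 2 ^ (k - Nat.log2 c) + 2 ^ (k - Nat.log2 c) / 2 ≤ n ∧
              n < (c - 2 ^ Nat.log2 c) * 2 ^ (k - Nat.log2 c) + 2 ^ (k - Nat.log2 c)
          then -((2 : ℝ) ^ Nat.log2 c / (2 : ℝ) ^ k) else 0) := by
    intro n _
    simp only [colFun, if_neg hc, add_one_mul]
  rw [Finset.sum_congr rfl point, sum_pm]

lemma half_add (k p : ℕ) (hpk : p < k) :
    2 ^ (k - p) / 2 + 2 ^ (k - p) / 2 = 2 ^ (k - p) := by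
  have h : 2 ^ (k - p) = 2 ^ (k - p - 1) * 2 := by
    rw [← pow_succ]; congr 1; omega
  omega

lemma half_mul (k p : ℕ) (hpk : p < k) :
    (2 : ℝ) ^ p / (2 : ℝ) ^ k * ((2 ^ (k - p) / 2 : ℕ) : ℝ) = 1 / 2 := by
  have h : (2 ^ (k - p) / 2 : ℕ) = 2 ^ (k - p - 1) := by
    have h2 : 2 ^ (k - p) = 2 ^ (k - p - 1) * 2 := by
      rw [← pow_succ]; congr 1; omega
    omega
  rw [h]
  push_cast
  have h1 : (2 : ℝ) ^ p * (2 : ℝ) ^ (k - p - 1) = 2 ^ (k - 1) := by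
    rw [← pow_add]; congr 1; omega
  have h2 : (2 : ℝ) ^ k = 2 ^ (k - 1) * 2 := by
    rw [← pow_succ]; congr 1; omega
  have h3 : (0 : ℝ) < 2 ^ (k - 1) := by positivity
  field_simp
  nlinarith [h1, h2]

lemma abs_helper (m l w hlf : ℕ) (hw : hlf + hlf = w) (a : ℝ) (ha : 0 ≤ a)
    (hah : a * ((hlf : ℕ) : ℝ) = 1 / 2) :
    |a * (((min (l + hlf) m - l : ℕ) : ℝ) - ((min (l + w) m - (l + hlf) : ℕ) : ℝ))| ≤ 1 := by
  have hb1 : min (l + hlf) m - l ≤ hlf := by omega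
  have hb2 : min (l + w) m - (l + hlf) ≤ hlf := by omega
  have hd : |((min (l + hlf) m - l : ℕ) : ℝ) - ((min (l + w) m - (l + hlf) : ℕ) : ℝ)|
      ≤ ((hlf : ℕ) : ℝ) := by
    rw [abs_le]
    have c1 : ((min (l + hlf) m - l : ℕ) : ℝ) ≤ hlf := by exact_mod_cast hb1
    have c2 : ((min (l + w) m - (l + hlf) : ℕ) : ℝ) ≤ hlf := by exact_mod_cast hb2
    have c3 : (0 : ℝ) ≤ ((min (l + hlf) m - l : ℕ) : ℝ) := Nat.cast_nonneg _
    have c4 : (0 : ℝ) ≤ ((min (l + w) m - (l + hlf) : ℕ) : ℝ) := Nat.cast_nonneg _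
    constructor <;> linarith
  calc |a * (((min (l + hlf) m - l : ℕ) : ℝ) - ((min (l + w) m - (l + hlf) : ℕ) : ℝ))|
      = a * |((min (l + hlf) m - l : ℕ) : ℝ) - ((min (l + w) m - (l + hlf) : ℕ) : ℝ)| := by
        rw [abs_mul, abs_of_nonneg ha]
    _ ≤ a * ((hlf : ℕ) : ℝ) := mul_le_mul_of_nonneg_left hd ha
    _ = 1 / 2 := hah
    _ ≤ 1 := by norm_num

lemma colSum_abs_le (k c : ℕ) (hc : c ≠ 0) (hck : c < 2 ^ k) (m : ℕ) :
    |∑ n ∈ Finset.range m, colFun k c n| ≤ 1 := by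
  rw [colSum k c hc m]
  have hpk : Nat.log2 c < k := (Nat.log2_lt hc).mpr hck
  exact abs_helper m _ _ _ (half_add k _ hpk) _ (by positivity) (half_mul k _ hpk)

lemma zero_helper (iv q w hlf e : ℕ) (hw : hlf + hlf = w) (hwpos : 0 < w)
    (he : e = iv / w) (hqe : q ≠ e) (a : ℝ) :
    a * (((min (q * w + hlf) (iv + 1) - q * w : ℕ) : ℝ)
        - ((min (q * w + w) (iv + 1) - (q * w + hlf) : ℕ) : ℝ)) = 0 := by
  have hdm : w * (iv / w) + iv % w = iv := Nat.div_add_mod iv w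
  have hmod : iv % w < w := Nat.mod_lt _ hwpos
  rcases lt_or_gt_of_ne hqe with hlt | hgt
  · have hm : (q + 1) * w ≤ e * w := Nat.mul_le_mul_right w hlt
    have hid : (q + 1) * w = q * w + w := by ring
    have hew : e * w ≤ iv := by
      calc e * w = w * (iv / w) := by rw [he, mul_comm]
        _ ≤ iv := by omega
    have e1 : min (q * w + hlf) (iv + 1) - q * w = hlf := by omega
    have e2 : min (q * w + w) (iv + 1) - (q * w + hlf) = hlf := by omega
    rw [e1, e2, sub_self, mul_zero]
  · have hm : (e + 1) * w ≤ q * w := Nat.mul_le_mul_right w hgt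
    have hid : (e + 1) * w = w * (iv / w) + w := by rw [he]; ring
    have hiv : iv < (e + 1) * w := by omega
    have e1 : min (q * w + hlf) (iv + 1) - q * w = 0 := by omega
    have e2 : min (q * w + w) (iv + 1) - (q * w + hlf) = 0 := by omega
    rw [e1, e2, sub_self, mul_zero]

lemma colSum_eq_zero (k c iv : ℕ) (hc : c ≠ 0) (hck : c < 2 ^ k)
    (hne : c ≠ 2 ^ Nat.log2 c + iv / 2 ^ (k - Nat.log2 c)) :
    ∑ n ∈ Finset.range (iv + 1), colFun k c n = 0 := by
  rw [colSum k c hc]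
  have hpk : Nat.log2 c < k := (Nat.log2_lt hc).mpr hck
  have h2p : 2 ^ Nat.log2 c ≤ c := Nat.log2_self_le hc
  have hwpos : 0 < 2 ^ (k - Nat.log2 c) := Nat.pow_pos (by norm_num)
  refine zero_helper iv _ _ _ (iv / 2 ^ (k - Nat.log2 c)) (half_add k _ hpk) hwpos rfl ?_ _
  intro hcontra
  exact hne (by omega)

lemma colSum_zero_col (k m : ℕ) (hm : m ≤ 2 ^ k) :
    |∑ n ∈ Finset.range m, colFun k 0 n| ≤ 1 := by
  have : ∀ n ∈ Finset.range m, colFun k 0 n = 1 / (2 : ℝ) ^ k := by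
    intro n _; simp [colFun]
  rw [Finset.sum_congr rfl this, Finset.sum_const, Finset.card_range, nsmul_eq_mul]
  have h1 : (0 : ℝ) < 2 ^ k := by positivity
  have h2 : (m : ℝ) ≤ 2 ^ k := by exact_mod_cast hm
  rw [abs_of_nonneg (by positivity)]
  rw [mul_one_div, div_le_one h1]
  exact h2

lemma filter_sum_eq (k : ℕ) (i c : Fin (2 ^ k)) :
    ∑ j ∈ Finset.univ.filter (fun j : Fin (2 ^ k) => j ≤ i), haarMatrix k j c
      = ∑ n ∈ Finset.range (i.val + 1), colFun k c.val n := by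
  rw [Finset.sum_filter]
  have point : ∀ j : Fin (2 ^ k),
      (if j ≤ i then haarMatrix k j c else 0)
        = (fun n => if n ≤ i.val then colFun k c.val n else 0) j.val := by
    intro j
    show _ = if j.val ≤ i.val then colFun k c.val j.val else 0
    by_cases hij : j ≤ i
    · rw [if_pos hij, if_pos (Fin.le_def.mp hij)]; rfl
    · rw [if_neg hij, if_neg (fun hh => hij (Fin.le_def.mpr hh))]
  rw [Finset.sum_congr rfl (fun j _ => point j),
    Fin.sum_univ_eq_sum_range (fun n => if n ≤ i.val then colFun k c.val n else 0) (2 ^ k)]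
  rw [← Finset.sum_subset (Finset.range_subset_range.mpr i.isLt)
    (fun x _ hx => by rw [if_neg (fun hle => hx (Finset.mem_range.mpr (by omega)))])]
  exact Finset.sum_congr rfl fun n hn => if_pos (by
    have := Finset.mem_range.mp hn; omega)

/-- For `Φ = (k+1) • M_k`, the sum of the first `i` rows of `Φ` has `ℓ2`-norm at most
`(k+1)^(3/2)` and `ℓ1`-norm at most `(k+1)^2`. -/
theorem haar_partial_row_sums (k : ℕ) (i : Fin (2 ^ k)) :
    Real.sqrt (∑ c : Fin (2 ^ k),
        (∑ j ∈ Finset.univ.filter (fun j : Fin (2 ^ k) => j ≤ i),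
          (((k : ℝ) + 1) • haarMatrix k) j c) ^ 2) ≤ ((k : ℝ) + 1) ^ ((3 : ℝ) / 2) ∧
    (∑ c : Fin (2 ^ k),
        |∑ j ∈ Finset.univ.filter (fun j : Fin (2 ^ k) => j ≤ i),
          (((k : ℝ) + 1) • haarMatrix k) j c|) ≤ ((k : ℝ) + 1) ^ 2 := by
  have hpk : (0 : ℕ) < 2 ^ k := Nat.pow_pos (by norm_num)
  set S : Fin (2 ^ k) → ℝ := fun c => ∑ n ∈ Finset.range (i.val + 1), colFun k c.val n with hS
  have hrw : ∀ c : Fin (2 ^ k),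
      (∑ j ∈ Finset.univ.filter (fun j : Fin (2 ^ k) => j ≤ i),
        (((k : ℝ) + 1) • haarMatrix k) j c) = ((k : ℝ) + 1) * S c := by
    intro c
    have : ∀ j ∈ Finset.univ.filter (fun j : Fin (2 ^ k) => j ≤ i),
        (((k : ℝ) + 1) • haarMatrix k) j c = ((k : ℝ) + 1) * haarMatrix k j c := by
      intro j _; simp [Matrix.smul_apply, smul_eq_mul]
    rw [Finset.sum_congr rfl this, ← Finset.mul_sum, filter_sum_eq k i c]
  -- designated columns
  set dcol : ℕ → Fin (2 ^ k) := fun p =>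
    ⟨(2 ^ p + i.val / 2 ^ (k - p)) % 2 ^ k, Nat.mod_lt _ hpk⟩ with hdcol
  set T : Finset (Fin (2 ^ k)) :=
    insert ⟨0, hpk⟩ ((Finset.range k).image dcol) with hT
  have hdlt : ∀ p < k, 2 ^ p + i.val / 2 ^ (k - p) < 2 ^ k := by
    intro p hp
    have hw : 0 < 2 ^ (k - p) := Nat.pow_pos (by norm_num)
    have h1 : i.val / 2 ^ (k - p) < 2 ^ p := by
      rw [Nat.div_lt_iff_lt_mul hw]
      calc i.val < 2 ^ k := i.isLt
        _ = 2 ^ p * 2 ^ (k - p) := by rw [← pow_add]; congr 1; omega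
    calc 2 ^ p + i.val / 2 ^ (k - p) < 2 ^ p + 2 ^ p := by omega
      _ = 2 ^ (p + 1) := by ring
      _ ≤ 2 ^ k := Nat.pow_le_pow_right (by norm_num) (by omega)
  have hT0 : ∀ c : Fin (2 ^ k), c ∉ T → S c = 0 := by
    intro c hcT
    simp only [hT, Finset.mem_insert, Finset.mem_image, Finset.mem_range, not_or,
      not_exists] at hcT
    obtain ⟨hc0, hcp⟩ := hcT
    have hc0' : c.val ≠ 0 := fun h => hc0 (Fin.ext h)
    have hpk2 : Nat.log2 c.val < k := (Nat.log2_lt hc0').mpr c.isLt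
    have hne := hcp (Nat.log2 c.val)
    have hne2 : c.val ≠ 2 ^ Nat.log2 c.val + i.val / 2 ^ (k - Nat.log2 c.val) := by
      intro hcontra
      apply hne ⟨hpk2, ?_⟩
      apply Fin.ext
      simp only [hdcol]
      rw [Nat.mod_eq_of_lt (hdlt _ hpk2)]
      exact hcontra.symm
    exact colSum_eq_zero k c.val i.val hc0' c.isLt hne2
  have hS1 : ∀ c : Fin (2 ^ k), |S c| ≤ 1 := by
    intro c
    by_cases hc : c.val = 0
    · simp only [hS, hc]
      exact colSum_zero_col k (i.val + 1) (by omega)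
    · exact colSum_abs_le k c.val hc c.isLt (i.val + 1)
  have hTcard : (T.card : ℝ) ≤ (k : ℝ) + 1 := by
    have h1 : T.card ≤ ((Finset.range k).image dcol).card + 1 := Finset.card_insert_le _ _
    have h2 : ((Finset.range k).image dcol).card ≤ k := by
      calc ((Finset.range k).image dcol).card ≤ (Finset.range k).card :=
            Finset.card_image_le
        _ = k := Finset.card_range k
    have : T.card ≤ k + 1 := by omega
    exact_mod_cast this
  have hB : ∑ c : Fin (2 ^ k), |S c| ≤ (k : ℝ) + 1 := by
    rw [← Finset.sum_subset (Finset.subset_univ T)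
      (fun c _ hc => by rw [hT0 c hc, abs_zero])]
    calc ∑ c ∈ T, |S c| ≤ ∑ _c ∈ T, (1 : ℝ) :=
          Finset.sum_le_sum (fun c _ => hS1 c)
      _ = T.card := by simp
      _ ≤ (k : ℝ) + 1 := hTcard
  constructor
  · -- ℓ2 bound
    have h1 : ∑ c : Fin (2 ^ k), (((k : ℝ) + 1) * S c) ^ 2 ≤ ((k : ℝ) + 1) ^ 3 := by
      have e1 : ∀ c ∈ (Finset.univ : Finset (Fin (2 ^ k))),
          (((k : ℝ) + 1) * S c) ^ 2 = ((k : ℝ) + 1) ^ 2 * (S c) ^ 2 := by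
        intro c _; ring
      rw [Finset.sum_congr rfl e1, ← Finset.mul_sum]
      have h2 : ∑ c : Fin (2 ^ k), (S c) ^ 2 ≤ (k : ℝ) + 1 := by
        refine le_trans (Finset.sum_le_sum fun c _ => ?_) hB
        have hle := hS1 c
        have hnn := abs_nonneg (S c)
        nlinarith [sq_abs (S c)]
      have h3 : (0 : ℝ) ≤ ((k : ℝ) + 1) ^ 2 := by positivity
      calc ((k : ℝ) + 1) ^ 2 * ∑ c : Fin (2 ^ k), (S c) ^ 2
          ≤ ((k : ℝ) + 1) ^ 2 * ((k : ℝ) + 1) := mul_le_mul_of_nonneg_left h2 h3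
        _ = ((k : ℝ) + 1) ^ 3 := by ring
    have hpow : ((k : ℝ) + 1) ^ ((3 : ℝ) / 2) = Real.sqrt (((k : ℝ) + 1) ^ 3) := by
      rw [Real.sqrt_eq_rpow, ← Real.rpow_natCast ((k : ℝ) + 1) 3,
        ← Real.rpow_mul (by positivity : (0 : ℝ) ≤ (k : ℝ) + 1)]
      norm_num
    rw [hpow]
    apply Real.sqrt_le_sqrt
    calc ∑ c : Fin (2 ^ k),
        (∑ j ∈ Finset.univ.filter (fun j : Fin (2 ^ k) => j ≤ i),
          (((k : ℝ) + 1) • haarMatrix k) j c) ^ 2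
        = ∑ c : Fin (2 ^ k), (((k : ℝ) + 1) * S c) ^ 2 := by
          exact Finset.sum_congr rfl fun c _ => by rw [hrw c]
      _ ≤ ((k : ℝ) + 1) ^ 3 := h1
  · -- ℓ1 bound
    have e1 : ∀ c ∈ (Finset.univ : Finset (Fin (2 ^ k))),
        |∑ j ∈ Finset.univ.filter (fun j : Fin (2 ^ k) => j ≤ i),
          (((k : ℝ) + 1) • haarMatrix k) j c| = ((k : ℝ) + 1) * |S c| := by
      intro c _
      rw [hrw c, abs_mul, abs_of_nonneg (by positivity : (0 : ℝ) ≤ (k : ℝ) + 1)]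
    rw [Finset.sum_congr rfl e1, ← Finset.mul_sum]
    have h3 : (0 : ℝ) ≤ (k : ℝ) + 1 := by positivity
    calc ((k : ℝ) + 1) * ∑ c : Fin (2 ^ k), |S c|
        ≤ ((k : ℝ) + 1) * ((k : ℝ) + 1) := mul_le_mul_of_nonneg_left hB h3
      _ = ((k : ℝ) + 1) ^ 2 := by ring
end

section
/- Let T: P(T) → R^m be an affine query operator with pseudo-inverse T† (satisfying T T† = identity on V = T(P(T))), and let L be a loss function on R^m × R^m dominating the utility loss U, i.e., U(T† v, T† v') ≤ L(v, v') for all v, v' ∈ V, with L satisfying the triangle inequality. Suppose A(D) minimizes μ ↦ L(ν_DP, T μ) over probability measures μ. Then U(μ_D, A(D)) ≤ U(μ_D, T† T μ_D) + 2 L(T μ_D, ν_DP) + U(A(D), T† T A(D)). -/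
open MeasureTheory

/-- Abstract utility–loss decomposition: if `U` is a pseudometric on probability
measures, `Tq` is a query operator with pseudo-inverse `Tdag` on its range,
`L` is a (pseudometric) loss on `ℝ^m` dominating `U` on the range of `Tq`,
and `AD` minimizes `μ ↦ L(ν_DP, Tq μ)`, then
`U(μ_D, AD) ≤ U(μ_D, T†T μ_D) + 2 L(Tq μ_D, ν_DP) + U(AD, T†T AD)`. -/
theorem utility_loss_decomposition
    {T : Type*} [MeasurableSpace T] {m : ℕ}
    (U : ProbabilityMeasure T → ProbabilityMeasure T → ℝ)
    (hUtri : ∀ μ ν ξ, U μ ξ ≤ U μ ν + U ν ξ)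
    (hUsymm : ∀ μ ν, U μ ν = U ν μ)
    (Tq : ProbabilityMeasure T → (Fin m → ℝ))
    (Tdag : (Fin m → ℝ) → ProbabilityMeasure T)
    (hinv : ∀ v ∈ Set.range Tq, Tq (Tdag v) = v)
    (L : (Fin m → ℝ) → (Fin m → ℝ) → ℝ)
    (hLtri : ∀ u v w, L u w ≤ L u v + L v w)
    (hLsymm : ∀ u v, L u v = L v u)
    (hdom : ∀ v ∈ Set.range Tq, ∀ v' ∈ Set.range Tq, U (Tdag v) (Tdag v') ≤ L v v')
    (νDP : Fin m → ℝ)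
    (μD AD : ProbabilityMeasure T)
    (hopt : ∀ μ : ProbabilityMeasure T, L νDP (Tq AD) ≤ L νDP (Tq μ)) :
    U μD AD ≤
      U μD (Tdag (Tq μD)) + 2 * L (Tq μD) νDP + U AD (Tdag (Tq AD)) := by
  have h1 : U μD AD ≤ U μD (Tdag (Tq μD)) + U (Tdag (Tq μD)) AD := hUtri _ _ _
  have h2 : U (Tdag (Tq μD)) AD ≤ U (Tdag (Tq μD)) (Tdag (Tq AD)) + U AD (Tdag (Tq AD)) := by
    have := hUtri (Tdag (Tq μD)) (Tdag (Tq AD)) AD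
    rw [hUsymm (Tdag (Tq AD)) AD] at this
    exact this
  have h3 : U (Tdag (Tq μD)) (Tdag (Tq AD)) ≤ L (Tq μD) (Tq AD) :=
    hdom _ ⟨μD, rfl⟩ _ ⟨AD, rfl⟩
  have h4 : L (Tq μD) (Tq AD) ≤ 2 * L (Tq μD) νDP := by
    have := hLtri (Tq μD) νDP (Tq AD)
    have h5 : L νDP (Tq AD) ≤ L (Tq μD) νDP := by
      rw [← hLsymm νDP (Tq μD)]; exact hopt μD
    linarith
  linarith
end

section
/- For probability measures ν, ν' on the real line with finite first moments, W_1(ν, ν') = ∫_R |F_ν(x) − F_{ν'}(x)| dx, where F denotes the cumulative distribution function (Vallender's identity). -/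
open MeasureTheory

/-- The 1-Wasserstein distance, defined via Kantorovich–Rubinstein duality as the
supremum of `|∫ f dμ − ∫ f dν|` over 1-Lipschitz (integrable) functions `f`. -/
noncomputable def W1 {T : Type*} [MeasurableSpace T] [PseudoMetricSpace T]
    (μ ν : Measure T) : ℝ :=
  sSup {r | ∃ f : T → ℝ, LipschitzWith 1 f ∧ Integrable f μ ∧ Integrable f ν ∧
    r = |∫ x, f x ∂μ - ∫ x, f x ∂ν|}

namespace Vallender

/-- Auxiliary weight function. -/
noncomputable def wfun (ν : Measure ℝ) (t : ℝ) : ℝ :=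
  if 0 < t then (ν (Set.Ici t)).toReal else -(ν (Set.Iio t)).toReal

/-- Kernel for the Fubini argument. -/
noncomputable def kfun (g : ℝ → ℝ) (p : ℝ × ℝ) : ℝ :=
  if 0 < p.2 ∧ p.2 ≤ p.1 then g p.2 else if p.1 < p.2 ∧ p.2 ≤ 0 then -g p.2 else 0

variable {g : ℝ → ℝ} {ν ν' : Measure ℝ}

lemma kfun_meas (hg : Measurable g) : Measurable (kfun g) := by
  unfold kfun
  refine Measurable.ite ?_ (hg.comp measurable_snd)
    (Measurable.ite ?_ (hg.comp measurable_snd).neg measurable_const)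
  · exact (measurableSet_lt measurable_const measurable_snd).inter
      (measurableSet_le measurable_snd measurable_fst)
  · exact (measurableSet_lt measurable_fst measurable_snd).inter
      (measurableSet_le measurable_snd measurable_const)

lemma g_ii (hg : Measurable g) (hg1 : ∀ t, |g t| ≤ 1) (a b : ℝ) :
    IntervalIntegrable g volume a b := by
  rw [intervalIntegrable_iff]
  refine Integrable.mono' (g := fun _ => (1 : ℝ)) ?_ hg.aestronglyMeasurable.restrict ?_
  · rw [Set.uIoc]
    exact integrableOn_const measure_Ioc_lt_top.ne
  · exact Filter.Eventually.of_forall fun t => by simpa [Real.norm_eq_abs] using hg1 t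

lemma kfun_inner (hg : Measurable g) (hg1 : ∀ t, |g t| ≤ 1) (x : ℝ) :
    ∫ t, kfun g (x, t) = ∫ t in (0:ℝ)..x, g t := by
  rcases le_or_gt 0 x with hx | hx
  · have h1 : (fun t => kfun g (x, t)) = (Set.Ioc 0 x).indicator g := by
      funext t
      by_cases ht : 0 < t ∧ t ≤ x
      · simp [kfun, ht, Set.indicator_of_mem (Set.mem_Ioc.mpr ht)]
      · have ht2 : ¬(x < t ∧ t ≤ 0) := by
          rintro ⟨h1, h2⟩; linarith
        simp [kfun, ht, ht2, Set.indicator_of_notMem (fun hm => ht (Set.mem_Ioc.mp hm))]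
    rw [h1, integral_indicator measurableSet_Ioc]
    exact (intervalIntegral.integral_of_le hx).symm
  · have h1 : (fun t => kfun g (x, t)) = fun t => -((Set.Ioc x 0).indicator g t) := by
      funext t
      by_cases ht : x < t ∧ t ≤ 0
      · have ht1 : ¬(0 < t ∧ t ≤ x) := by rintro ⟨h1, h2⟩; linarith
        simp [kfun, ht, ht1, Set.indicator_of_mem (Set.mem_Ioc.mpr ht)]
      · have ht1 : ¬(0 < t ∧ t ≤ x) := by rintro ⟨h1, h2⟩; linarith
        simp [kfun, ht, ht1, Set.indicator_of_notMem (fun hm => ht (Set.mem_Ioc.mp hm))]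
    rw [h1, integral_neg, integral_indicator measurableSet_Ioc]
    exact (intervalIntegral.integral_of_ge hx.le).symm

lemma kfun_sect [IsFiniteMeasure ν] (t : ℝ) :
    ∫ x, kfun g (x, t) ∂ν = g t * wfun ν t := by
  rcases lt_or_ge 0 t with ht | ht
  · have h1 : (fun x => kfun g (x, t)) = (Set.Ici t).indicator (fun _ => g t) := by
      funext x
      by_cases hx : t ≤ x
      · simp [kfun, ht, hx, Set.indicator_of_mem (Set.mem_Ici.mpr hx)]
      · simp [kfun, hx, ht.not_ge, Set.indicator_of_notMem (fun hm => hx (Set.mem_Ici.mp hm))]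
    rw [h1, integral_indicator_const _ measurableSet_Ici]
    rw [measureReal_def, wfun, if_pos ht, smul_eq_mul, mul_comm]
  · have h1 : (fun x => kfun g (x, t)) = (Set.Iio t).indicator (fun _ => -g t) := by
      funext x
      by_cases hx : x < t
      · simp [kfun, ht.not_gt, hx, ht, Set.indicator_of_mem (Set.mem_Iio.mpr hx)]
      · simp [kfun, ht.not_gt, hx, Set.indicator_of_notMem (fun hm => hx (Set.mem_Iio.mp hm))]
    rw [h1, integral_indicator_const _ measurableSet_Iio]
    rw [measureReal_def, wfun, if_neg ht.not_gt, smul_eq_mul]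
    ring

lemma kfun_norm_le (hg1 : ∀ t, |g t| ≤ 1) (p : ℝ × ℝ) :
    ‖kfun g p‖ ≤ (Set.uIoc 0 p.1).indicator (fun _ => (1 : ℝ)) p.2 := by
  obtain ⟨x, t⟩ := p
  simp only [kfun]
  split_ifs with h1 h2
  · rw [Set.indicator_of_mem (Set.mem_uIoc.mpr (Or.inl h1))]
    simpa [Real.norm_eq_abs] using hg1 t
  · rw [Set.indicator_of_mem (Set.mem_uIoc.mpr (Or.inr h2))]
    simpa [Real.norm_eq_abs] using hg1 t
  · simpa using Set.indicator_nonneg (fun _ _ => zero_le_one) t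

lemma ind_int (x : ℝ) : Integrable ((Set.uIoc 0 x).indicator (fun _ => (1 : ℝ))) := by
  refine IntegrableOn.integrable_indicator ?_ measurableSet_uIoc
  rw [Set.uIoc]
  exact integrableOn_const measure_Ioc_lt_top.ne

lemma ind_integral (x : ℝ) :
    ∫ t, (Set.uIoc 0 x).indicator (fun _ => (1 : ℝ)) t = |x| := by
  rw [integral_indicator measurableSet_uIoc, setIntegral_const, smul_eq_mul, mul_one]
  have hv : volume (Set.uIoc 0 x) = ENNReal.ofReal |x| := by
    rw [Set.uIoc, Real.volume_Ioc, max_sub_min_eq_abs, sub_zero]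
  rw [measureReal_def, hv, ENNReal.toReal_ofReal (abs_nonneg x)]

lemma kfun_int [IsProbabilityMeasure ν] (hg : Measurable g) (hg1 : ∀ t, |g t| ≤ 1)
    (hν : Integrable (fun x : ℝ => x) ν) :
    Integrable (kfun g) (ν.prod volume) := by
  have hmeas := (kfun_meas hg).aestronglyMeasurable (μ := ν.prod volume)
  rw [integrable_prod_iff hmeas]
  constructor
  · refine Filter.Eventually.of_forall fun x => ?_
    refine Integrable.mono' (ind_int x)
      ((kfun_meas hg).comp measurable_prodMk_left).aestronglyMeasurable ?_
    exact Filter.Eventually.of_forall fun t => kfun_norm_le hg1 (x, t)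
  · refine Integrable.mono' hν.abs hmeas.norm.integral_prod_right' ?_
    refine Filter.Eventually.of_forall fun x => ?_
    rw [Real.norm_eq_abs, abs_of_nonneg (integral_nonneg fun t => norm_nonneg _)]
    calc ∫ t, ‖kfun g (x, t)‖
        ≤ ∫ t, (Set.uIoc 0 x).indicator (fun _ => (1 : ℝ)) t :=
          integral_mono_of_nonneg (Filter.Eventually.of_forall fun t => norm_nonneg _)
            (ind_int x) (Filter.Eventually.of_forall fun t => kfun_norm_le hg1 (x, t))
      _ = |x| := ind_integral x

lemma L1 [IsProbabilityMeasure ν] (hg : Measurable g) (hg1 : ∀ t, |g t| ≤ 1)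
    (hν : Integrable (fun x : ℝ => x) ν) :
    ∫ x, (∫ t in (0:ℝ)..x, g t) ∂ν = ∫ t, g t * wfun ν t := by
  have hk := kfun_int hg hg1 hν
  have hs := integral_integral_swap (f := fun x t => kfun g (x, t)) hk
  simp_rw [kfun_inner hg hg1, kfun_sect] at hs
  exact hs

lemma gw_int [IsProbabilityMeasure ν] (hg : Measurable g) (hg1 : ∀ t, |g t| ≤ 1)
    (hν : Integrable (fun x : ℝ => x) ν) :
    Integrable (fun t => g t * wfun ν t) := by
  have h := (kfun_int hg hg1 hν).integral_prod_right
  exact h.congr (Filter.Eventually.of_forall fun t => kfun_sect t)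

lemma ae_Iio_eq_Iic (ν : Measure ℝ) [IsFiniteMeasure ν] :
    ∀ᵐ t : ℝ, (ν (Set.Iio t)).toReal = (ν (Set.Iic t)).toReal := by
  have hc : Set.Countable {t : ℝ | 0 < ν {a : ℝ | a = t}} :=
    Measure.countable_meas_level_set_pos₀ measurable_id.nullMeasurable
  have hz : volume {t : ℝ | 0 < ν {a : ℝ | a = t}} = 0 := hc.measure_zero _
  rw [← compl_mem_ae_iff] at hz
  filter_upwards [hz] with t ht
  have hsing : ν {t} = 0 := by
    have : ¬0 < ν {a : ℝ | a = t} := ht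
    have h0 : ν {a : ℝ | a = t} = 0 := by
      by_contra h
      exact this (lt_of_le_of_ne zero_le (Ne.symm h))
    simpa [Set.setOf_eq_eq_singleton] using h0
  have : ν (Set.Iic t) = ν (Set.Iio t) := by
    rw [← Set.Iio_union_right]
    refine le_antisymm ?_ (measure_mono Set.subset_union_left)
    calc ν (Set.Iio t ∪ {t}) ≤ ν (Set.Iio t) + ν {t} := measure_union_le _ _
      _ = ν (Set.Iio t) := by rw [hsing, add_zero]
  rw [this]

lemma Ici_toReal [IsProbabilityMeasure ν] (t : ℝ) :
    (ν (Set.Ici t)).toReal = 1 - (ν (Set.Iio t)).toReal := by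
  rw [← Set.compl_Iio, measure_compl measurableSet_Iio (measure_ne_top _ _), measure_univ,
    ENNReal.toReal_sub_of_le prob_le_one ENNReal.one_ne_top, ENNReal.toReal_one]

lemma wfun_diff [IsProbabilityMeasure ν] [IsProbabilityMeasure ν'] :
    ∀ᵐ t : ℝ, wfun ν t - wfun ν' t
      = (ν' (Set.Iic t)).toReal - (ν (Set.Iic t)).toReal := by
  filter_upwards [ae_Iio_eq_Iic ν, ae_Iio_eq_Iic ν'] with t h1 h2
  rw [wfun, wfun]
  split_ifs with ht
  · rw [Ici_toReal, Ici_toReal]; linarith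
  · linarith

lemma key [IsProbabilityMeasure ν] [IsProbabilityMeasure ν']
    (hg : Measurable g) (hg1 : ∀ t, |g t| ≤ 1)
    (hν : Integrable (fun x : ℝ => x) ν) (hν' : Integrable (fun x : ℝ => x) ν') :
    (∫ x, (∫ t in (0:ℝ)..x, g t) ∂ν) - ∫ x, (∫ t in (0:ℝ)..x, g t) ∂ν'
      = ∫ t, g t * ((ν' (Set.Iic t)).toReal - (ν (Set.Iic t)).toReal) := by
  rw [L1 hg hg1 hν, L1 hg hg1 hν', ← integral_sub (gw_int hg hg1 hν) (gw_int hg hg1 hν')]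
  refine integral_congr_ae ?_
  filter_upwards [wfun_diff (ν := ν) (ν' := ν')] with t h
  show g t * wfun ν t - g t * wfun ν' t = _
  rw [← mul_sub, h]

lemma E_int [IsProbabilityMeasure ν] [IsProbabilityMeasure ν']
    (hν : Integrable (fun x : ℝ => x) ν) (hν' : Integrable (fun x : ℝ => x) ν') :
    Integrable (fun t => (ν' (Set.Iic t)).toReal - (ν (Set.Iic t)).toReal) := by
  have h1 : Integrable (fun t => wfun ν t) := by
    simpa using gw_int (g := fun _ => (1 : ℝ)) measurable_const (fun t => by norm_num) hν
  have h2 : Integrable (fun t => wfun ν' t) := by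
    simpa using gw_int (g := fun _ => (1 : ℝ)) measurable_const (fun t => by norm_num) hν'
  exact (h1.sub h2).congr wfun_diff

lemma gE_int [IsProbabilityMeasure ν] [IsProbabilityMeasure ν']
    (hg : Measurable g) (hg1 : ∀ t, |g t| ≤ 1)
    (hν : Integrable (fun x : ℝ => x) ν) (hν' : Integrable (fun x : ℝ => x) ν') :
    Integrable (fun t => g t * ((ν' (Set.Iic t)).toReal - (ν (Set.Iic t)).toReal)) := by
  refine ((gw_int hg hg1 hν).sub (gw_int hg hg1 hν')).congr ?_
  filter_upwards [wfun_diff (ν := ν) (ν' := ν')] with t h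
  show g t * wfun ν t - g t * wfun ν' t = _
  rw [← mul_sub, h]

lemma fg_lip (hg : Measurable g) (hg1 : ∀ t, |g t| ≤ 1) :
    LipschitzWith 1 (fun x => ∫ t in (0:ℝ)..x, g t) := by
  refine LipschitzWith.of_dist_le_mul fun x y => ?_
  rw [Real.dist_eq, Real.dist_eq, NNReal.coe_one]
  calc |(∫ t in (0:ℝ)..x, g t) - ∫ t in (0:ℝ)..y, g t|
      = ‖∫ t in y..x, g t‖ := by
        rw [intervalIntegral.integral_interval_sub_left (g_ii hg hg1 0 x) (g_ii hg hg1 0 y)]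
        rw [Real.norm_eq_abs]
    _ ≤ 1 * |x - y| := intervalIntegral.norm_integral_le_of_norm_le_const fun t _ => by
        simpa [Real.norm_eq_abs] using hg1 t

lemma fg_int [IsProbabilityMeasure ν] (hg : Measurable g) (hg1 : ∀ t, |g t| ≤ 1)
    (hν : Integrable (fun x : ℝ => x) ν) :
    Integrable (fun x => ∫ t in (0:ℝ)..x, g t) ν := by
  refine Integrable.mono' hν.abs (fg_lip hg hg1).continuous.aestronglyMeasurable ?_
  refine Filter.Eventually.of_forall fun x => ?_
  have h := (fg_lip hg hg1).dist_le_mul x 0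
  rw [Real.dist_eq, Real.dist_eq] at h
  simp only [intervalIntegral.integral_same, sub_zero, NNReal.coe_one, one_mul] at h
  simpa [Real.norm_eq_abs] using h

lemma upper [IsProbabilityMeasure ν] [IsProbabilityMeasure ν']
    (hν : Integrable (fun x : ℝ => x) ν) (hν' : Integrable (fun x : ℝ => x) ν')
    {f : ℝ → ℝ} (hf : LipschitzWith 1 f)
    (hfν : Integrable f ν) (hfν' : Integrable f ν') :
    |(∫ x, f x ∂ν) - ∫ x, f x ∂ν'|
      ≤ ∫ t, |(ν (Set.Iic t)).toReal - (ν' (Set.Iic t)).toReal| := by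
  set I := ∫ t, |(ν (Set.Iic t)).toReal - (ν' (Set.Iic t)).toReal| with hI
  refine le_of_forall_pos_le_add fun ε hε => ?_
  set h : ℝ := ε / 4 with hh
  have hh0 : 0 < h := by positivity
  set g : ℝ → ℝ := fun t => (f (t + h) - f t) / h with hgdef
  have hfc : Continuous f := hf.continuous
  have hg : Measurable g := by
    exact (((hfc.comp (continuous_id.add continuous_const)).sub hfc).div_const h).measurable
  have hlip : ∀ a b : ℝ, |f a - f b| ≤ |a - b| := by
    intro a b
    have := hf.dist_le_mul a b
    rwa [Real.dist_eq, Real.dist_eq, NNReal.coe_one, one_mul] at this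
  have hg1 : ∀ t, |g t| ≤ 1 := by
    intro t
    rw [hgdef]
    rw [abs_div, abs_of_pos hh0, div_le_one hh0]
    calc |f (t + h) - f t| ≤ |t + h - t| := hlip _ _
      _ = h := by rw [add_sub_cancel_left, abs_of_pos hh0]
  set F : ℝ → ℝ := fun x => ∫ t in (0:ℝ)..x, g t with hF
  have hfi : ∀ a b : ℝ, IntervalIntegrable f volume a b := fun a b => hfc.intervalIntegrable a b
  -- single-point averaging bound
  have avg : ∀ y : ℝ, |f y - (1 / h) * ∫ t in y..(y + h), f t| ≤ h := by
    intro y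
    have hrw : f y - (1 / h) * ∫ t in y..(y + h), f t
        = (1 / h) * ∫ t in y..(y + h), (f y - f t) := by
      rw [intervalIntegral.integral_sub (intervalIntegrable_const) (hfi y (y + h)),
        intervalIntegral.integral_const]
      field_simp
      ring
    rw [hrw, abs_mul, abs_of_pos (by positivity : (0:ℝ) < 1 / h)]
    have hb : ‖∫ t in y..(y + h), (f y - f t)‖ ≤ h * |y + h - y| := by
      refine intervalIntegral.norm_integral_le_of_norm_le_const fun t ht => ?_
      rw [Set.uIoc_of_le (by linarith : y ≤ y + h)] at ht
      rw [Real.norm_eq_abs]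
      calc |f y - f t| ≤ |y - t| := hlip _ _
        _ = t - y := by rw [abs_sub_comm, abs_of_pos (sub_pos.mpr ht.1)]
        _ ≤ h := by linarith [ht.2]
    rw [Real.norm_eq_abs] at hb
    calc (1 / h) * |∫ t in y..(y + h), (f y - f t)| ≤ (1 / h) * (h * |y + h - y|) :=
          mul_le_mul_of_nonneg_left hb (by positivity)
      _ = h := by
          rw [add_sub_cancel_left, abs_of_pos hh0]
          field_simp
  have approx : ∀ x : ℝ, |f x - f 0 - F x| ≤ 2 * h := by
    intro x
    have rep : F x = (1 / h) * ((∫ t in x..(x + h), f t) - ∫ t in (0:ℝ)..h, f t) := by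
      have e0 : F x = (∫ t in (0:ℝ)..x, (f (t + h) - f t)) / h := by
        rw [hF, hgdef]
        exact intervalIntegral.integral_div h (fun t => f (t + h) - f t)
      have e1 : (∫ t in (0:ℝ)..x, (f (t + h) - f t))
          = (∫ t in h..(x + h), f t) - ∫ t in (0:ℝ)..x, f t := by
        have hct : Continuous fun t : ℝ => f (t + h) := by fun_prop
        rw [intervalIntegral.integral_sub (hct.intervalIntegrable 0 x) (hfi 0 x)]
        congr 1
        simpa using intervalIntegral.integral_comp_add_right (a := (0:ℝ)) (b := x) f h
      have c1 : (∫ t in h..x, f t) + ∫ t in x..(x + h), f t = ∫ t in h..(x + h), f t :=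
        intervalIntegral.integral_add_adjacent_intervals (hfi h x) (hfi x (x + h))
      have c2 : (∫ t in (0:ℝ)..h, f t) + ∫ t in h..x, f t = ∫ t in (0:ℝ)..x, f t :=
        intervalIntegral.integral_add_adjacent_intervals (hfi 0 h) (hfi h x)
      rw [e0, e1]
      field_simp
      linarith
    have b1 := avg x
    have b2 := avg 0
    rw [zero_add] at b2
    have : f x - f 0 - F x
        = (f x - (1 / h) * ∫ t in x..(x + h), f t) - (f 0 - (1 / h) * ∫ t in (0:ℝ)..h, f t) := by
      rw [rep]; ring
    rw [this]
    calc |(f x - (1 / h) * ∫ t in x..(x + h), f t) - (f 0 - (1 / h) * ∫ t in (0:ℝ)..h, f t)|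
        ≤ |f x - (1 / h) * ∫ t in x..(x + h), f t| + |f 0 - (1 / h) * ∫ t in (0:ℝ)..h, f t| :=
          abs_sub _ _
      _ ≤ 2 * h := by linarith
  -- key bound for F
  have hkey := key hg hg1 hν hν'
  have hFb : |(∫ x, F x ∂ν) - ∫ x, F x ∂ν'| ≤ I := by
    rw [hF, hkey]
    calc |∫ t, g t * ((ν' (Set.Iic t)).toReal - (ν (Set.Iic t)).toReal)|
        ≤ ∫ t, |g t * ((ν' (Set.Iic t)).toReal - (ν (Set.Iic t)).toReal)| := by
          simpa only [Real.norm_eq_abs] using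
            norm_integral_le_integral_norm (μ := volume)
              (fun t => g t * ((ν' (Set.Iic t)).toReal - (ν (Set.Iic t)).toReal))
      _ ≤ ∫ t, |(ν' (Set.Iic t)).toReal - (ν (Set.Iic t)).toReal| := by
          refine integral_mono (gE_int hg hg1 hν hν').abs (E_int hν hν').abs fun t => ?_
          rw [abs_mul]
          exact mul_le_of_le_one_left (abs_nonneg _) (hg1 t)
      _ = I := by
          rw [hI]
          exact integral_congr_ae (Filter.Eventually.of_forall fun t => abs_sub_comm _ _)
  -- assemble
  set φ : ℝ → ℝ := fun x => f x - f 0 - F x with hφ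
  have hφν : Integrable φ ν := (hfν.sub (integrable_const _)).sub (fg_int hg hg1 hν)
  have hφν' : Integrable φ ν' := (hfν'.sub (integrable_const _)).sub (fg_int hg hg1 hν')
  have hFν : Integrable F ν := fg_int hg hg1 hν
  have hFν' : Integrable F ν' := fg_int hg hg1 hν'
  have hsub : ∀ (μ : Measure ℝ) [IsProbabilityMeasure μ], Integrable f μ → Integrable F μ →
      ∫ x, (f x - f 0 - F x) ∂μ = (∫ x, f x ∂μ) - f 0 - ∫ x, F x ∂μ := by
    intro μ _ hfμ hFμ
    have h1 : Integrable (fun x => f x - f 0) μ := hfμ.sub (integrable_const _)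
    rw [integral_sub h1 hFμ, integral_sub hfμ (integrable_const _)]
    simp
  have e1 : ∫ x, φ x ∂ν = (∫ x, f x ∂ν) - f 0 - ∫ x, F x ∂ν := hsub ν hfν hFν
  have e1' : ∫ x, φ x ∂ν' = (∫ x, f x ∂ν') - f 0 - ∫ x, F x ∂ν' := hsub ν' hfν' hFν'
  have hde : (∫ x, f x ∂ν) - ∫ x, f x ∂ν'
      = ((∫ x, φ x ∂ν) - ∫ x, φ x ∂ν') + ((∫ x, F x ∂ν) - ∫ x, F x ∂ν') := by
    rw [e1, e1']; ring
  have hφb : ∀ (μ : Measure ℝ) [IsProbabilityMeasure μ], |∫ x, φ x ∂μ| ≤ 2 * h := by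
    intro μ _
    have := norm_integral_le_of_norm_le_const (μ := μ) (f := φ) (C := 2 * h)
      (Filter.Eventually.of_forall fun x => by
        rw [Real.norm_eq_abs]; exact approx x)
    simpa [Real.norm_eq_abs, measure_univ] using this
  calc |(∫ x, f x ∂ν) - ∫ x, f x ∂ν'|
      = |((∫ x, φ x ∂ν) - ∫ x, φ x ∂ν') + ((∫ x, F x ∂ν) - ∫ x, F x ∂ν')| := by rw [hde]
    _ ≤ |(∫ x, φ x ∂ν) - ∫ x, φ x ∂ν'| + |(∫ x, F x ∂ν) - ∫ x, F x ∂ν'| := abs_add_le _ _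
    _ ≤ (|∫ x, φ x ∂ν| + |∫ x, φ x ∂ν'|) + I := add_le_add (abs_sub _ _) hFb
    _ ≤ (2 * h + 2 * h) + I := add_le_add (add_le_add (hφb ν) (hφb ν')) le_rfl
    _ = I + ε := by rw [hh]; ring

end Vallender

/-- Vallender's identity: for probability measures on `ℝ` with finite first moments,
`W₁(ν, ν') = ∫ |F_ν(x) − F_{ν'}(x)| dx`. -/
theorem W1_eq_integral_abs_cdf_sub (ν ν' : Measure ℝ)
    [IsProbabilityMeasure ν] [IsProbabilityMeasure ν']
    (hν : Integrable (fun x : ℝ => x) ν) (hν' : Integrable (fun x : ℝ => x) ν') :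
    W1 ν ν' = ∫ x : ℝ, |(ν (Set.Iic x)).toReal - (ν' (Set.Iic x)).toReal| := by
  classical
  set I := ∫ x : ℝ, |(ν (Set.Iic x)).toReal - (ν' (Set.Iic x)).toReal| with hI
  set g₀ : ℝ → ℝ := fun t =>
    if (ν (Set.Iic t)).toReal ≤ (ν' (Set.Iic t)).toReal then (1 : ℝ) else -1 with hg₀def
  have hmono : ∀ (μ : Measure ℝ) [IsProbabilityMeasure μ],
      Measurable (fun t => (μ (Set.Iic t)).toReal) := by
    intro μ _
    have : Monotone (fun t => (μ (Set.Iic t)).toReal) := fun a b hab =>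
      ENNReal.toReal_mono (measure_ne_top _ _) (measure_mono (Set.Iic_subset_Iic.mpr hab))
    exact this.measurable
  have hg₀ : Measurable g₀ :=
    Measurable.ite (measurableSet_le (hmono ν) (hmono ν')) measurable_const measurable_const
  have hg₀1 : ∀ t, |g₀ t| ≤ 1 := by
    intro t
    simp only [hg₀def]
    split_ifs <;> simp
  set F₀ : ℝ → ℝ := fun x => ∫ t in (0:ℝ)..x, g₀ t with hF₀
  have hkey := Vallender.key hg₀ hg₀1 hν hν'
  have hptw : ∀ t, g₀ t * ((ν' (Set.Iic t)).toReal - (ν (Set.Iic t)).toReal)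
      = |(ν (Set.Iic t)).toReal - (ν' (Set.Iic t)).toReal| := by
    intro t
    simp only [hg₀def]
    split_ifs with hc
    · rw [one_mul, abs_sub_comm, abs_of_nonneg (by linarith)]
    · have hlt := not_le.mp hc
      rw [abs_of_pos (by linarith)]
      ring
  have hval : (∫ x, F₀ x ∂ν) - ∫ x, F₀ x ∂ν' = I := by
    rw [hF₀, hkey, hI]
    exact integral_congr_ae (Filter.Eventually.of_forall fun t => hptw t)
  have hInonneg : 0 ≤ I := by
    rw [hI]
    exact integral_nonneg fun t => abs_nonneg _
  have hmem : I ∈ {r | ∃ f : ℝ → ℝ, LipschitzWith 1 f ∧ Integrable f ν ∧ Integrable f ν' ∧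
      r = |∫ x, f x ∂ν - ∫ x, f x ∂ν'|} := by
    refine ⟨F₀, Vallender.fg_lip hg₀ hg₀1, Vallender.fg_int hg₀ hg₀1 hν,
      Vallender.fg_int hg₀ hg₀1 hν', ?_⟩
    rw [hval, abs_of_nonneg hInonneg]
  have hub : ∀ r ∈ {r | ∃ f : ℝ → ℝ, LipschitzWith 1 f ∧ Integrable f ν ∧ Integrable f ν' ∧
      r = |∫ x, f x ∂ν - ∫ x, f x ∂ν'|}, r ≤ I := by
    rintro r ⟨f, hf, h1, h2, rfl⟩
    exact Vallender.upper hν hν' hf h1 h2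
  rw [W1]
  exact le_antisymm (csSup_le ⟨I, hmem⟩ hub) (le_csSup ⟨I, hub⟩ hmem)
end
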